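/- Let G ≅ C₃ × C_{3^k} with k ≥ 2. Then the image A₁ of the power map x ↦ x^{3^{k−1}} is a subgroup of G of order 3, and A₁ is the unique subgroup of order 3 that is invariant under every automorphism of G; i.e., every other subgroup of order 3 is mapped to a different subgroup by some automorphism of G. -/

import Mathlib

section Aux

variable (k : ℕ)

noncomputable def fAux (hk : 1 ≤ k) : ZMod 3 →+ ZMod (3 ^ k) :=
  ZMod.lift 3 ⟨zmultiplesHom _ ((3 ^ (k - 1) : ℕ) : ZMod (3 ^ k)), by
    simp only [zmultiplesHom_apply, natCast_zsmul]
    rw [← Nat.cast_smul_eq_nsmul (ZMod (3 ^ k)), smul_eq_mul, ← Nat.cast_mul,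
      ZMod.natCast_eq_zero_iff]
    rw [← pow_succ']
    exact pow_dvd_pow 3 (by omega)⟩

lemma fAux_apply (hk : 1 ≤ k) (a : ZMod 3) :
    fAux k hk a = ((a.val * 3 ^ (k - 1) : ℕ) : ZMod (3 ^ k)) := by
  conv_lhs => rw [show a = ((a.val : ℤ) : ZMod 3) by push_cast [ZMod.natCast_val, ZMod.cast_id]; rfl]
  rw [fAux, ZMod.lift_coe]
  simp only [zmultiplesHom_apply, natCast_zsmul]
  rw [← Nat.cast_smul_eq_nsmul (ZMod (3 ^ k)), smul_eq_mul, ← Nat.cast_mul]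

lemma fAux_injective (hk : 1 ≤ k) : Function.Injective (fAux k hk) := by
  intro a b hab
  have h : fAux k hk (a - b) = 0 := by rw [map_sub, hab, sub_self]
  rw [fAux_apply, ZMod.natCast_eq_zero_iff] at h
  have hdvd : 3 ∣ (a - b).val := by
    have h1 : (3 : ℕ) ^ k = 3 ^ (k - 1) * 3 := by
      rw [← pow_succ]; congr 1; omega
    rw [h1] at h
    rcases h with ⟨c, hc⟩
    have hpos : 0 < (3 : ℕ) ^ (k - 1) := pow_pos (by norm_num) _
    refine ⟨c, ?_⟩
    have h2 : 3 ^ (k - 1) * ((a - b).val) = 3 ^ (k - 1) * (3 * c) := by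
      ring_nf; ring_nf at hc; linarith
    exact Nat.eq_of_mul_eq_mul_left hpos h2
  have hval : (a - b).val < 3 := (a - b).val_lt
  have h0 : (a - b).val = 0 := Nat.eq_zero_of_dvd_of_lt hdvd (by omega)
  have : a - b = 0 := (ZMod.val_eq_zero _).mp h0
  exact sub_eq_zero.mp this

noncomputable def shearAux (hk : 1 ≤ k) :
    (ZMod 3 × ZMod (3 ^ k)) ≃+ (ZMod 3 × ZMod (3 ^ k)) where
  toFun x := (x.1, x.2 + fAux k hk x.1)
  invFun x := (x.1, x.2 - fAux k hk x.1)
  left_inv x := by simp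
  right_inv x := by simp
  map_add' x y := by
    refine Prod.ext rfl ?_
    show (x.2 + y.2) + fAux k hk (x.1 + y.1) = (x.2 + fAux k hk x.1) + (y.2 + fAux k hk y.1)
    rw [map_add]; ring

end Aux

theorem stmt_10 (k : ℕ) (hk : 2 ≤ k) :
    ∃ A₁ : AddSubgroup (ZMod 3 × ZMod (3 ^ k)),
      (A₁ : Set (ZMod 3 × ZMod (3 ^ k))) = Set.range (fun x : ZMod 3 × ZMod (3 ^ k) => 3 ^ (k - 1) • x) ∧
      Nat.card A₁ = 3 ∧
      (∀ σ : AddAut (ZMod 3 × ZMod (3 ^ k)), A₁.map σ.toAddMonoidHom = A₁) ∧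
      (∀ L : AddSubgroup (ZMod 3 × ZMod (3 ^ k)), Nat.card L = 3 → L ≠ A₁ →
        ∃ σ : AddAut (ZMod 3 × ZMod (3 ^ k)), L.map σ.toAddMonoidHom ≠ L) := by
  haveI : NeZero (3 ^ k) := ⟨pow_ne_zero k (by norm_num)⟩
  have hk1 : 1 ≤ k := by omega
  set g : ZMod 3 × ZMod (3 ^ k) := (0, ((3 ^ (k - 1) : ℕ) : ZMod (3 ^ k))) with hg
  set A₁ := AddSubgroup.zmultiples g with hA₁
  -- component computations
  have hc1 : ∀ a : ZMod 3, 3 ^ (k - 1) • a = 0 := by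
    intro a
    rw [nsmul_eq_mul]
    have h0 : ((3 ^ (k - 1) : ℕ) : ZMod 3) = 0 := by
      rw [ZMod.natCast_eq_zero_iff]
      exact dvd_pow_self 3 (by omega)
    push_cast at h0 ⊢
    rw [h0, zero_mul]
  have hns : ∀ x : ZMod 3 × ZMod (3 ^ k),
      3 ^ (k - 1) • x = (0, ((3 ^ (k - 1) : ℕ) : ZMod (3 ^ k)) * x.2) := by
    intro x
    rw [← Prod.mk.eta (p := x), Prod.smul_mk, hc1, nsmul_eq_mul]
  have hzg : ∀ n : ℤ, n • g = (0, ((n : ZMod (3 ^ k)) * ((3 ^ (k - 1) : ℕ) : ZMod (3 ^ k)))) := by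
    intro n
    rw [hg, Prod.smul_mk, smul_zero, zsmul_eq_mul]
  -- the set equality
  have hset : (A₁ : Set (ZMod 3 × ZMod (3 ^ k))) =
      Set.range (fun x : ZMod 3 × ZMod (3 ^ k) => 3 ^ (k - 1) • x) := by
    ext x
    simp only [SetLike.mem_coe, hA₁, AddSubgroup.mem_zmultiples_iff, Set.mem_range]
    constructor
    · rintro ⟨n, rfl⟩
      refine ⟨(0, ((n : ℤ) : ZMod (3 ^ k))), ?_⟩
      rw [hns, hzg]
      exact Prod.ext rfl (mul_comm _ _)
    · rintro ⟨y, rfl⟩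
      refine ⟨(y.2.val : ℤ), ?_⟩
      rw [hns, hzg]
      refine Prod.ext rfl ?_
      push_cast [ZMod.natCast_zmod_val]
      ring
  have hmem : ∀ x : ZMod 3 × ZMod (3 ^ k),
      x ∈ A₁ ↔ ∃ y, 3 ^ (k - 1) • y = x := by
    intro x
    rw [← SetLike.mem_coe, hset]
    exact Iff.rfl
  -- the cardinality
  have hcard : Nat.card A₁ = 3 := by
    rw [hA₁, Nat.card_zmultiples]
    rw [hg, Prod.addOrderOf, addOrderOf_zero, Nat.lcm_one_left]
    rw [ZMod.addOrderOf_coe _ (pow_ne_zero k (by norm_num))]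
    have hgcd : Nat.gcd (3 ^ k) (3 ^ (k - 1)) = 3 ^ (k - 1) :=
      Nat.gcd_eq_right (pow_dvd_pow 3 (by omega))
    rw [hgcd, Nat.pow_div (by omega) (by norm_num)]
    have h1 : k - (k - 1) = 1 := by omega
    rw [h1, pow_one]
  -- 3 • x = 0 for members of order-3 subgroups
  have h3smul : ∀ (P : AddSubgroup (ZMod 3 × ZMod (3 ^ k))), Nat.card P = 3 →
      ∀ x ∈ P, 3 • x = 0 := by
    intro P hP x hx
    have hd := AddSubgroup.addOrderOf_dvd_natCard P hx
    rw [hP] at hd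
    exact addOrderOf_dvd_iff_nsmul_eq_zero.mp hd
  -- common nonzero element forces equality of order-3 subgroups
  have hgen : ∀ (P : AddSubgroup (ZMod 3 × ZMod (3 ^ k))), Nat.card P = 3 →
      ∀ y ∈ P, y ≠ 0 → AddSubgroup.zmultiples y = P := by
    intro P hP y hy hy0
    have hordy : addOrderOf y = 3 := by
      have hd := AddSubgroup.addOrderOf_dvd_natCard P hy
      rw [hP] at hd
      rcases (Nat.prime_three.eq_one_or_self_of_dvd _ hd) with h | h
      · exact absurd (AddMonoid.addOrderOf_eq_one_iff.mp h) hy0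
      · exact h
    refine AddSubgroup.eq_of_le_of_card_ge ((AddSubgroup.zmultiples_le).mpr hy) ?_
    rw [hP, Nat.card_zmultiples, hordy]
  -- elements of first-coordinate zero and 3-torsion lie in A₁
  have hmemA : ∀ x : ZMod 3 × ZMod (3 ^ k), x.1 = 0 → 3 • x = 0 → x ∈ A₁ := by
    intro x hx1 hx3
    rw [hmem]
    have hb : 3 • x.2 = 0 := by
      have := congrArg Prod.snd hx3
      simpa using this
    have hdvd : (3 : ℕ) ^ k ∣ 3 * x.2.val := by
      rw [← ZMod.natCast_eq_zero_iff]
      push_cast [ZMod.natCast_zmod_val]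
      rw [← hb, nsmul_eq_mul]
      norm_num
    have hdvd2 : (3 : ℕ) ^ (k - 1) ∣ x.2.val := by
      obtain ⟨c, hc⟩ := hdvd
      have h1 : (3 : ℕ) ^ k = 3 * 3 ^ (k - 1) := by
        rw [← pow_succ']; congr 1; omega
      have h2 : 3 * x.2.val = 3 * (3 ^ (k - 1) * c) := by rw [hc, h1]; ring
      exact ⟨c, Nat.eq_of_mul_eq_mul_left (by norm_num) h2⟩
    obtain ⟨c, hc⟩ := hdvd2
    refine ⟨(0, ((c : ℕ) : ZMod (3 ^ k))), ?_⟩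
    rw [hns]
    refine Prod.ext hx1.symm ?_
    show ((3 ^ (k - 1) : ℕ) : ZMod (3 ^ k)) * ((c : ℕ) : ZMod (3 ^ k)) = x.2
    rw [← Nat.cast_mul, ← hc, ZMod.natCast_zmod_val]
  refine ⟨A₁, hset, hcard, ?_, ?_⟩
  · -- invariance
    have hle : ∀ τ : AddAut (ZMod 3 × ZMod (3 ^ k)), A₁.map τ.toAddMonoidHom ≤ A₁ := by
      intro τ x hx
      obtain ⟨y, hy, rfl⟩ := AddSubgroup.mem_map.mp hx
      obtain ⟨z, rfl⟩ := (hmem y).mp hy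
      rw [hmem]
      exact ⟨τ z, by rw [map_nsmul]; rfl⟩
    intro σ
    refine le_antisymm (hle σ) ?_
    intro x hx
    have h1 : σ.symm x ∈ A₁ := hle σ.symm (AddSubgroup.mem_map_of_mem _ hx)
    refine AddSubgroup.mem_map.mpr ⟨σ.symm x, h1, ?_⟩
    simp
  · -- uniqueness
    intro L hL hne
    by_cases hall : ∀ x ∈ L, (x : ZMod 3 × ZMod (3 ^ k)).1 = 0
    · exfalso
      apply hne
      have hle : L ≤ A₁ := fun x hx => hmemA x (hall x hx) (h3smul L hL x hx)
      exact AddSubgroup.eq_of_le_of_card_ge hle (by rw [hL, hcard])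
    · push_neg at hall
      obtain ⟨x, hxL, hx1⟩ := hall
      refine ⟨(shearAux k hk1 : AddAut (ZMod 3 × ZMod (3 ^ k))), fun h => ?_⟩
      set σ : AddAut (ZMod 3 × ZMod (3 ^ k)) := (shearAux k hk1 : AddAut _) with hσ
      have h1 : σ.toAddMonoidHom x ∈ L := h ▸ AddSubgroup.mem_map_of_mem _ hxL
      have h2 : σ.toAddMonoidHom x - x ∈ L := AddSubgroup.sub_mem L h1 hxL
      have hyval : σ.toAddMonoidHom x - x = (0, fAux k hk1 x.1) := by
        show (shearAux k hk1) x - x = (0, fAux k hk1 x.1)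
        rw [← Prod.mk.eta (p := x)]
        show (x.1, x.2 + fAux k hk1 x.1) - (x.1, x.2) = (0, fAux k hk1 x.1)
        rw [Prod.mk_sub_mk, sub_self]
        congr 1
        ring
      rw [hyval] at h2
      have hy0 : (0, fAux k hk1 x.1) ≠ (0 : ZMod 3 × ZMod (3 ^ k)) := by
        intro hc
        apply hx1
        apply fAux_injective k hk1
        rw [map_zero]
        exact congrArg Prod.snd hc
      have hyA : (0, fAux k hk1 x.1) ∈ A₁ := by
        rw [hmem]
        refine ⟨(0, ((x.1.val : ℕ) : ZMod (3 ^ k))), ?_⟩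
        rw [hns]
        refine Prod.ext rfl ?_
        rw [fAux_apply]
        push_cast
        ring
      have e1 := hgen L hL _ h2 hy0
      have e2 := hgen A₁ hcard _ hyA hy0
      exact hne (e1.symm.trans e2)
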